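/- Let R be a commutative ring, φ : R → R a ring endomorphism, and Φ the restriction-of-scalars functor along φ. Given an R-module M and an R-linear map β : M → Φ(M), the direct limit M_∞ := colim(M → Φ(M) → Φ²(M) → ⋯) along the maps Φᵉ(β) satisfies Φ(M_∞) ≅ M_∞ compatibly with the structural map, i.e., M_∞ is a unit R[Θ; φ]-module, provided Φ commutes with direct limits (e.g., φ is flat, or more generally Φ is given by restriction of scalars which always commutes with colimits). -/

import Mathlib

open CategoryTheory CategoryTheory.Limits

variable {R : Type} [CommRing R]

/-- The tower `M, Φ(M), Φ²(M), …` of iterates of the restriction-of-scalars functor `Φ`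
along `φ` applied to `M`. -/
noncomputable def phiTower (φ : R →+* R) (M : ModuleCat R) : ℕ → ModuleCat R
  | 0 => M
  | e + 1 => (ModuleCat.restrictScalars φ).obj (phiTower φ M e)

/-- The transition maps `Φᵉ(β) : Φᵉ(M) ⟶ Φᵉ⁺¹(M)` of the tower. -/
noncomputable def phiTowerMap (φ : R →+* R) (M : ModuleCat R)
    (β : M ⟶ (ModuleCat.restrictScalars φ).obj M) :
    ∀ e : ℕ, phiTower φ M e ⟶ phiTower φ M (e + 1)
  | 0 => β
  | e + 1 => (ModuleCat.restrictScalars φ).map (phiTowerMap φ M β e)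

/-- Let `φ : R → R` be a ring endomorphism, `Φ` restriction of scalars along
`φ`, `M` an `R`-module and `β : M → Φ(M)` an `R`-linear map. If `Φ` commutes with
direct limits, then the direct limit `M_∞ = colim (M → Φ(M) → Φ²(M) → ⋯)` satisfies
`Φ(M_∞) ≅ M_∞` compatibly with the structure maps of the colimit; i.e. `M_∞` is a unit
`R[Θ; φ]`-module. -/
theorem colimit_phi_tower_is_unit (φ : R →+* R) (M : ModuleCat R)
    (β : M ⟶ (ModuleCat.restrictScalars φ).obj M)
    [PreservesColimitsOfShape ℕ (ModuleCat.restrictScalars φ)] :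
    ∃ α : (ModuleCat.restrictScalars φ).obj
        (colimit (Functor.ofSequence (phiTowerMap φ M β))) ≅
        colimit (Functor.ofSequence (phiTowerMap φ M β)),
      ∀ e : ℕ,
        (ModuleCat.restrictScalars φ).map
            (colimit.ι (Functor.ofSequence (phiTowerMap φ M β)) e) ≫ α.hom =
          colimit.ι (Functor.ofSequence (phiTowerMap φ M β)) (e + 1) := by
  let Φ : ModuleCat R ⥤ ModuleCat R := ModuleCat.restrictScalars φ
  let F : ℕ ⥤ ModuleCat R := Functor.ofSequence (phiTowerMap φ M β)
  -- key defeq: (F ⋙ Φ).obj e = F.obj (e+1), and (F ⋙ Φ).map succ = F.map succ shifted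
  have hmap : ∀ e : ℕ, (F ⋙ Φ).map (homOfLE (e.le_add_right 1)) =
      (F.map (homOfLE ((e+1).le_add_right 1)) : F.obj (e+1) ⟶ F.obj (e+2)) := by
    intro e
    show Φ.map (F.map (homOfLE (e.le_add_right 1))) = _
    rw [Functor.ofSequence_map_homOfLE_succ, Functor.ofSequence_map_homOfLE_succ]
    rfl
  -- cocone on F ⋙ Φ with apex colim F and legs ι (e+1)
  let c : Cocone (F ⋙ Φ) :=
    { pt := colimit F
      ι := NatTrans.ofSequence (F := F ⋙ Φ) (G := (Functor.const ℕ).obj (colimit F))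
        (fun e => (colimit.ι F (e + 1) : F.obj (e+1) ⟶ colimit F))
        (fun e => by
          rw [hmap e]
          exact (colimit.w F (homOfLE ((e+1).le_add_right 1))).trans (Category.comp_id _).symm) }
  have hc : IsColimit c :=
    { desc := fun s => colimit.desc F
        { pt := s.pt
          ι := NatTrans.ofSequence
            (fun e => F.map (homOfLE (e.le_add_right 1)) ≫ s.ι.app e)
            (fun e => by
              dsimp
              rw [Category.comp_id]
              congr 1
              have := s.w (homOfLE (e.le_add_right 1))
              rw [hmap e] at this
              exact this) }
      fac := fun s e => by
        show colimit.ι F (e+1) ≫ _ = _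
        rw [colimit.ι_desc]
        dsimp
        have := s.w (homOfLE (e.le_add_right 1))
        rw [hmap e] at this
        exact this
      uniq := fun s m hm => by
        apply colimit.hom_ext
        intro e
        rw [colimit.ι_desc]
        dsimp
        rw [← colimit.w F (homOfLE (e.le_add_right 1)), Category.assoc]
        congr 1
        exact hm e }
  refine ⟨(isColimitOfPreserves Φ (colimit.isColimit F)).coconePointUniqueUpToIso hc, fun e => ?_⟩
  exact (isColimitOfPreserves Φ (colimit.isColimit F)).comp_coconePointUniqueUpToIso_hom hc e
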